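/- Let y₀ : ℝ → ℝ be twice continuously differentiable with y₀, y₀', and y₀'' all bounded on ℝ. For t > 0 and x ∈ ℝ define u(t, x) := ∫_ℝ (2π)^{−1/2} e^{−α²/2} · y₀(x − √(2t)·α) dα. Then for every t > 0 and x ∈ ℝ, the partial derivatives ∂_t u(t,x) and ∂²_{xx} u(t,x) exist and ∂_t u(t, x) = ∂²_{xx} u(t, x). -/

import Mathlib

open MeasureTheory Real

lemma gauss_integrable : Integrable (fun α : ℝ => Real.exp (-α ^ 2 / 2)) := by
  have := integrable_exp_neg_mul_sq (by norm_num : (0:ℝ) < 1/2)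
  convert this using 2 with α
  ring_nf

lemma gauss_abs_integrable : Integrable (fun α : ℝ => |α| * Real.exp (-α ^ 2 / 2)) := by
  have := (integrable_rpow_mul_exp_neg_mul_sq (by norm_num : (0:ℝ) < 1/2)
    (by norm_num : (-1:ℝ) < 1)).abs
  simp only [Real.rpow_one] at this
  convert this using 2 with α
  rw [abs_mul, abs_of_nonneg (Real.exp_pos _).le]
  congr 1
  ring_nf

lemma gauss_nonneg (α : ℝ) : 0 ≤ (Real.sqrt (2 * Real.pi))⁻¹ * Real.exp (-α ^ 2 / 2) :=
  mul_nonneg (inv_nonneg.2 (Real.sqrt_nonneg _)) (Real.exp_pos _).le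

lemma int_weight (h : ℝ → ℝ) (hc : Continuous h) (C : ℝ) (hb : ∀ z, |h z| ≤ C) (s x : ℝ) :
    Integrable (fun α : ℝ => (Real.sqrt (2 * Real.pi))⁻¹ * Real.exp (-α ^ 2 / 2) *
      h (x - s * α)) := by
  apply Integrable.mono' ((gauss_integrable.const_mul ((Real.sqrt (2 * Real.pi))⁻¹ * C)))
  · exact (((continuous_const.mul (Real.continuous_exp.comp (by continuity))).mul
      (hc.comp (by continuity)))).aestronglyMeasurable
  · filter_upwards with α
    rw [Real.norm_eq_abs]
    calc |(Real.sqrt (2 * Real.pi))⁻¹ * Real.exp (-α ^ 2 / 2) * h (x - s * α)|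
        = (Real.sqrt (2 * Real.pi))⁻¹ * Real.exp (-α ^ 2 / 2) * |h (x - s * α)| := by
          rw [abs_mul, abs_of_nonneg (gauss_nonneg α)]
      _ ≤ (Real.sqrt (2 * Real.pi))⁻¹ * Real.exp (-α ^ 2 / 2) * C := by
          gcongr
          exact hb _
      _ = (Real.sqrt (2 * Real.pi))⁻¹ * C * Real.exp (-α ^ 2 / 2) := by ring

lemma int_weight_lin (h : ℝ → ℝ) (hc : Continuous h) (C : ℝ) (hb : ∀ z, |h z| ≤ C) (s x : ℝ) :
    Integrable (fun α : ℝ => α * ((Real.sqrt (2 * Real.pi))⁻¹ * Real.exp (-α ^ 2 / 2) *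
      h (x - s * α))) := by
  apply Integrable.mono' ((gauss_abs_integrable.const_mul ((Real.sqrt (2 * Real.pi))⁻¹ * C)))
  · exact (continuous_id.mul ((continuous_const.mul (Real.continuous_exp.comp (by continuity))).mul
      (hc.comp (by continuity)))).aestronglyMeasurable
  · filter_upwards with α
    rw [Real.norm_eq_abs]
    calc |α * ((Real.sqrt (2 * Real.pi))⁻¹ * Real.exp (-α ^ 2 / 2) * h (x - s * α))|
        = |α| * ((Real.sqrt (2 * Real.pi))⁻¹ * Real.exp (-α ^ 2 / 2) * |h (x - s * α)|) := by
          rw [abs_mul, abs_mul, abs_of_nonneg (gauss_nonneg α)]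
      _ ≤ |α| * ((Real.sqrt (2 * Real.pi))⁻¹ * Real.exp (-α ^ 2 / 2) * C) := by
          gcongr
          exact hb _
      _ = (Real.sqrt (2 * Real.pi))⁻¹ * C * (|α| * Real.exp (-α ^ 2 / 2)) := by ring

lemma key_deriv (h : ℝ → ℝ) (hh : Differentiable ℝ h) (hc' : Continuous (deriv h))
    (C : ℝ) (hb0 : ∀ z, |h z| ≤ C) (hb1 : ∀ z, |deriv h z| ≤ C) (s x : ℝ) :
    HasDerivAt (fun x' => ∫ α : ℝ, (Real.sqrt (2 * Real.pi))⁻¹ * Real.exp (-α ^ 2 / 2) *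
        h (x' - s * α))
      (∫ α : ℝ, (Real.sqrt (2 * Real.pi))⁻¹ * Real.exp (-α ^ 2 / 2) * deriv h (x - s * α)) x := by
  have inner : ∀ (x' α : ℝ), HasDerivAt (fun x'' => h (x'' - s * α)) (deriv h (x' - s * α)) x' := by
    intro x' α
    have := ((hh (x' - s * α)).hasDerivAt).comp x' ((hasDerivAt_id x').sub_const (s * α))
    exact this.congr_deriv (mul_one _)
  have key := hasDerivAt_integral_of_dominated_loc_of_deriv_le (μ := volume)
    (F := fun x' α => (Real.sqrt (2 * Real.pi))⁻¹ * Real.exp (-α ^ 2 / 2) * h (x' - s * α))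
    (F' := fun x' α => (Real.sqrt (2 * Real.pi))⁻¹ * Real.exp (-α ^ 2 / 2) * deriv h (x' - s * α))
    (x₀ := x) (bound := fun α => (Real.sqrt (2 * Real.pi))⁻¹ * C * Real.exp (-α ^ 2 / 2))
    (Metric.ball_mem_nhds x one_pos) ?_ (int_weight h hh.continuous C hb0 s x) ?_ ?_
    (gauss_integrable.const_mul _) ?_
  · exact key.2
  · filter_upwards with x'
    exact (int_weight h hh.continuous C hb0 s x').aestronglyMeasurable
  · exact (int_weight (deriv h) hc' C hb1 s x).aestronglyMeasurable
  · filter_upwards with α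
    intro x' _
    calc ‖(Real.sqrt (2 * Real.pi))⁻¹ * Real.exp (-α ^ 2 / 2) * deriv h (x' - s * α)‖
        = (Real.sqrt (2 * Real.pi))⁻¹ * Real.exp (-α ^ 2 / 2) * |deriv h (x' - s * α)| := by
          rw [Real.norm_eq_abs, abs_mul, abs_of_nonneg (gauss_nonneg α)]
      _ ≤ (Real.sqrt (2 * Real.pi))⁻¹ * Real.exp (-α ^ 2 / 2) * C := by
          gcongr
          exact hb1 _
      _ = (Real.sqrt (2 * Real.pi))⁻¹ * C * Real.exp (-α ^ 2 / 2) := by ring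
  · filter_upwards with α
    intro x' _
    exact (inner x' α).const_mul _

lemma gauss_exp_hasDeriv (α : ℝ) :
    HasDerivAt (fun β : ℝ => Real.exp (-β ^ 2 / 2)) (Real.exp (-α ^ 2 / 2) * (-α)) α := by
  have h1 : HasDerivAt (fun β : ℝ => -β ^ 2 / 2) (-α) α := by
    have := ((hasDerivAt_pow 2 α).neg).div_const 2
    simpa using this.congr_deriv (by push_cast; ring)
  exact h1.exp

lemma ibp (h : ℝ → ℝ) (hh : Differentiable ℝ h) (hc' : Continuous (deriv h))
    (C : ℝ) (hb0 : ∀ z, |h z| ≤ C) (hb1 : ∀ z, |deriv h z| ≤ C) (s x : ℝ) :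
    ∫ α : ℝ, α * ((Real.sqrt (2 * Real.pi))⁻¹ * Real.exp (-α ^ 2 / 2) * h (x - s * α))
      = -s * ∫ α : ℝ, (Real.sqrt (2 * Real.pi))⁻¹ * Real.exp (-α ^ 2 / 2) *
          deriv h (x - s * α) := by
  set c : ℝ := (Real.sqrt (2 * Real.pi))⁻¹ with hc
  have hinner : ∀ α : ℝ, HasDerivAt (fun β : ℝ => h (x - s * β))
      (deriv h (x - s * α) * (-s)) α := by
    intro α
    have h2 : HasDerivAt (fun β : ℝ => x - s * β) (-s) α := by
      simpa using ((hasDerivAt_id α).const_mul s).const_sub x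
    exact ((hh (x - s * α)).hasDerivAt).comp α h2
  have hφ : ∀ α : ℝ, HasDerivAt (fun β : ℝ => c * Real.exp (-β ^ 2 / 2) * h (x - s * β))
      ((-1 : ℝ) * (α * (c * Real.exp (-α ^ 2 / 2) * h (x - s * α)))
        + (-s) * (c * Real.exp (-α ^ 2 / 2) * deriv h (x - s * α))) α := by
    intro α
    have := (((gauss_exp_hasDeriv α).const_mul c).mul (hinner α))
    exact this.congr_deriv (by ring)
  have hint_φ : Integrable (fun α : ℝ => c * Real.exp (-α ^ 2 / 2) * h (x - s * α)) :=
    int_weight h hh.continuous C hb0 s x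
  have hA : Integrable (fun α : ℝ =>
      (-1 : ℝ) * (α * (c * Real.exp (-α ^ 2 / 2) * h (x - s * α)))) :=
    (int_weight_lin h hh.continuous C hb0 s x).const_mul (-1)
  have hB : Integrable (fun α : ℝ =>
      (-s) * (c * Real.exp (-α ^ 2 / 2) * deriv h (x - s * α))) :=
    (int_weight (deriv h) hc' C hb1 s x).const_mul (-s)
  have hzero : ∫ α : ℝ, ((-1 : ℝ) * (α * (c * Real.exp (-α ^ 2 / 2) * h (x - s * α)))
      + (-s) * (c * Real.exp (-α ^ 2 / 2) * deriv h (x - s * α))) = 0 :=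
    integral_eq_zero_of_hasDerivAt_of_integrable hφ (hA.add hB) hint_φ
  rw [integral_add hA hB, integral_const_mul, integral_const_mul] at hzero
  linarith

/-- Transport–heat averaging: the Gaussian velocity average
`u(t,x) = ∫ (2π)^{-1/2} e^{-α²/2} y₀(x - √(2t) α) dα` of the transported data
solves the heat equation `∂_t u = ∂²_{xx} u` for `t > 0`. -/
theorem transport_heat_averaging
    (y₀ : ℝ → ℝ) (hy : ContDiff ℝ 2 y₀)
    (C : ℝ) (hbound : ∀ x : ℝ, |y₀ x| ≤ C ∧ |deriv y₀ x| ≤ C ∧ |deriv (deriv y₀) x| ≤ C)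
    (u : ℝ → ℝ → ℝ)
    (hu : u = fun t x =>
      ∫ α : ℝ, (Real.sqrt (2 * Real.pi))⁻¹ * Real.exp (-α ^ 2 / 2) *
        y₀ (x - Real.sqrt (2 * t) * α)) :
    ∀ t : ℝ, 0 < t → ∀ x : ℝ,
      DifferentiableAt ℝ (u t) x ∧ DifferentiableAt ℝ (deriv (u t)) x ∧
        HasDerivAt (fun τ : ℝ => u τ x) (deriv (deriv (u t)) x) t := by
  subst hu
  have h1 : Differentiable ℝ y₀ := hy.differentiable (by norm_num)
  have hy2 : ContDiff ℝ (1 + 1) y₀ := by norm_num; exact hy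
  have h2 : ContDiff ℝ 1 (deriv y₀) := (contDiff_succ_iff_deriv.mp hy2).2.2
  have hdy : Differentiable ℝ (deriv y₀) := h2.differentiable one_ne_zero
  have hcy' : Continuous (deriv y₀) := hdy.continuous
  have hcy'' : Continuous (deriv (deriv y₀)) := h2.continuous_deriv le_rfl
  have hb0 : ∀ z, |y₀ z| ≤ C := fun z => (hbound z).1
  have hb1 : ∀ z, |deriv y₀ z| ≤ C := fun z => (hbound z).2.1
  have hb2 : ∀ z, |deriv (deriv y₀) z| ≤ C := fun z => (hbound z).2.2
  intro t ht x
  set s : ℝ := Real.sqrt (2 * t) with hs_def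
  have hs : 0 < s := Real.sqrt_pos.2 (by linarith)
  -- first x-derivative
  have U1 : ∀ x' : ℝ, HasDerivAt
      (fun x'' => ∫ α : ℝ, (Real.sqrt (2 * Real.pi))⁻¹ * Real.exp (-α ^ 2 / 2) *
        y₀ (x'' - s * α))
      (∫ α : ℝ, (Real.sqrt (2 * Real.pi))⁻¹ * Real.exp (-α ^ 2 / 2) *
        deriv y₀ (x' - s * α)) x' :=
    fun x' => key_deriv y₀ h1 hcy' C hb0 hb1 s x'
  have hderiv1 : deriv (fun x'' => ∫ α : ℝ, (Real.sqrt (2 * Real.pi))⁻¹ *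
      Real.exp (-α ^ 2 / 2) * y₀ (x'' - s * α))
      = fun x' => ∫ α : ℝ, (Real.sqrt (2 * Real.pi))⁻¹ * Real.exp (-α ^ 2 / 2) *
        deriv y₀ (x' - s * α) :=
    funext fun x' => (U1 x').deriv
  have U2 : ∀ x' : ℝ, HasDerivAt
      (deriv (fun x'' => ∫ α : ℝ, (Real.sqrt (2 * Real.pi))⁻¹ * Real.exp (-α ^ 2 / 2) *
        y₀ (x'' - s * α)))
      (∫ α : ℝ, (Real.sqrt (2 * Real.pi))⁻¹ * Real.exp (-α ^ 2 / 2) *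
        deriv (deriv y₀) (x' - s * α)) x' := by
    intro x'
    rw [hderiv1]
    exact key_deriv (deriv y₀) hdy hcy'' C hb1 hb2 s x'
  have hderiv2 : deriv (deriv (fun x'' => ∫ α : ℝ, (Real.sqrt (2 * Real.pi))⁻¹ *
      Real.exp (-α ^ 2 / 2) * y₀ (x'' - s * α))) x
      = ∫ α : ℝ, (Real.sqrt (2 * Real.pi))⁻¹ * Real.exp (-α ^ 2 / 2) *
        deriv (deriv y₀) (x - s * α) := (U2 x).deriv
  refine ⟨(U1 x).differentiableAt, (U2 x).differentiableAt, ?_⟩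
  rw [hderiv2]
  -- time derivative via dominated convergence
  have hF_diff : ∀ α : ℝ, ∀ τ ∈ Metric.ball t (t / 2), HasDerivAt
      (fun σ : ℝ => (Real.sqrt (2 * Real.pi))⁻¹ * Real.exp (-α ^ 2 / 2) *
        y₀ (x - Real.sqrt (2 * σ) * α))
      ((Real.sqrt (2 * Real.pi))⁻¹ * Real.exp (-α ^ 2 / 2) *
        (deriv y₀ (x - Real.sqrt (2 * τ) * α) * (-((Real.sqrt (2 * τ))⁻¹ * α)))) τ := by
    intro α τ hτ
    have hτpos : 0 < τ := by
      have := Metric.mem_ball.mp hτ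
      rw [Real.dist_eq, abs_lt] at this
      linarith [this.1]
    have hs2τ : (0:ℝ) < Real.sqrt (2 * τ) := Real.sqrt_pos.2 (by linarith)
    have hsq : HasDerivAt (fun σ : ℝ => Real.sqrt (2 * σ)) ((Real.sqrt (2 * τ))⁻¹) τ := by
      have hmul : HasDerivAt (fun σ : ℝ => 2 * σ) 2 τ := by
        simpa using (hasDerivAt_id τ).const_mul 2
      have := (Real.hasDerivAt_sqrt (by positivity : (2:ℝ) * τ ≠ 0)).comp τ hmul
      refine this.congr_deriv ?_
      field_simp
    have hinner : HasDerivAt (fun σ : ℝ => x - Real.sqrt (2 * σ) * α)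
        (-((Real.sqrt (2 * τ))⁻¹ * α)) τ := (hsq.mul_const α).const_sub x
    exact (((h1 _).hasDerivAt).comp τ hinner).const_mul _
  have key := hasDerivAt_integral_of_dominated_loc_of_deriv_le (μ := volume)
    (F := fun τ α => (Real.sqrt (2 * Real.pi))⁻¹ * Real.exp (-α ^ 2 / 2) *
      y₀ (x - Real.sqrt (2 * τ) * α))
    (F' := fun τ α => (Real.sqrt (2 * Real.pi))⁻¹ * Real.exp (-α ^ 2 / 2) *
      (deriv y₀ (x - Real.sqrt (2 * τ) * α) * (-((Real.sqrt (2 * τ))⁻¹ * α))))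
    (x₀ := t)
    (bound := fun α => (Real.sqrt (2 * Real.pi))⁻¹ * C * (Real.sqrt t)⁻¹ *
      (|α| * Real.exp (-α ^ 2 / 2)))
    (Metric.ball_mem_nhds t (half_pos ht)) ?_ ?_ ?_ ?_ (gauss_abs_integrable.const_mul _) ?_
  · have heq : (∫ α : ℝ, (Real.sqrt (2 * Real.pi))⁻¹ * Real.exp (-α ^ 2 / 2) *
        (deriv y₀ (x - Real.sqrt (2 * t) * α) * (-((Real.sqrt (2 * t))⁻¹ * α))))
        = ∫ α : ℝ, (Real.sqrt (2 * Real.pi))⁻¹ * Real.exp (-α ^ 2 / 2) *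
          deriv (deriv y₀) (x - s * α) := by
      have hrw : (fun α : ℝ => (Real.sqrt (2 * Real.pi))⁻¹ * Real.exp (-α ^ 2 / 2) *
          (deriv y₀ (x - Real.sqrt (2 * t) * α) * (-((Real.sqrt (2 * t))⁻¹ * α))))
          = fun α : ℝ => (-(s⁻¹)) * (α * ((Real.sqrt (2 * Real.pi))⁻¹ *
            Real.exp (-α ^ 2 / 2) * deriv y₀ (x - s * α))) := by
        funext α
        rw [← hs_def]
        ring
      rw [hrw, integral_const_mul, ibp (deriv y₀) hdy hcy'' C hb1 hb2 s x]
      field_simp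
    rw [← heq]
    exact key.2
  · filter_upwards with τ
    exact (int_weight y₀ h1.continuous C hb0 (Real.sqrt (2 * τ)) x).aestronglyMeasurable
  · exact int_weight y₀ h1.continuous C hb0 s x
  · exact Continuous.aestronglyMeasurable (by fun_prop)
  · filter_upwards with α
    intro τ hτ
    have hτpos : t / 2 < τ := by
      have := Metric.mem_ball.mp hτ
      rw [Real.dist_eq, abs_lt] at this
      linarith [this.1]
    have hs2τ : Real.sqrt t ≤ Real.sqrt (2 * τ) := Real.sqrt_le_sqrt (by linarith)
    have hst : (0:ℝ) < Real.sqrt t := Real.sqrt_pos.2 ht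
    have hinv : (Real.sqrt (2 * τ))⁻¹ ≤ (Real.sqrt t)⁻¹ :=
      inv_anti₀ hst hs2τ
    calc ‖(Real.sqrt (2 * Real.pi))⁻¹ * Real.exp (-α ^ 2 / 2) *
          (deriv y₀ (x - Real.sqrt (2 * τ) * α) * (-((Real.sqrt (2 * τ))⁻¹ * α)))‖
        = (Real.sqrt (2 * Real.pi))⁻¹ * Real.exp (-α ^ 2 / 2) *
          (|deriv y₀ (x - Real.sqrt (2 * τ) * α)| * ((Real.sqrt (2 * τ))⁻¹ * |α|)) := by
          rw [Real.norm_eq_abs, abs_mul, abs_of_nonneg (gauss_nonneg α), abs_mul, abs_neg,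
            abs_mul, abs_of_nonneg (inv_nonneg.2 (Real.sqrt_nonneg _))]
      _ ≤ (Real.sqrt (2 * Real.pi))⁻¹ * Real.exp (-α ^ 2 / 2) *
          (C * ((Real.sqrt t)⁻¹ * |α|)) := by
          gcongr
          · exact (abs_nonneg _).trans (hb1 0)
          · exact hb1 _
      _ = (Real.sqrt (2 * Real.pi))⁻¹ * C * (Real.sqrt t)⁻¹ *
          (|α| * Real.exp (-α ^ 2 / 2)) := by ring
  · filter_upwards with α
    intro τ hτ
    exact hF_diff α τ hτ
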